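/- Derivative bound for the hyperbolic exponential: for every natural number m there is a constant C, depending only on m, such that for all z ≥ 1 and all τ ∈ ℝ, |D^{2m}[σ ↦ e^{-z cosh σ}](τ)| ≤ C z^{2m} e^{-(z/2) cosh τ}, where D^{2m}[f](τ) denotes the 2m-th derivative of f at τ. -/

import Mathlib

open Real

private lemma coshC_re (w : ℂ) : (Complex.cosh w).re = Real.cosh w.re * Real.cos w.im := by
  rw [Complex.cosh, Real.cosh_eq]
  simp [Complex.exp_re, Complex.add_re, Complex.div_re, Complex.neg_re, Complex.neg_im]
  ring

private lemma abs_sinh_le_cosh (x : ℝ) : |Real.sinh x| ≤ Real.cosh x := by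
  rw [abs_le]
  constructor
  · nlinarith [Real.cosh_add_sinh x, Real.exp_pos x]
  · nlinarith [Real.cosh_sub_sinh x, Real.exp_pos (-x)]

private lemma cosh_lower {τ x : ℝ} (h : |x - τ| ≤ 4⁻¹) :
    3 / 4 * Real.cosh τ ≤ Real.cosh x := by
  set δ := x - τ with hδ
  have h1 : Real.cosh x = Real.cosh τ * Real.cosh δ + Real.sinh τ * Real.sinh δ := by
    have := Real.cosh_add τ δ
    rw [hδ, add_sub_cancel] at this
    exact this
  have hd : 3 / 4 ≤ Real.cosh δ - |Real.sinh δ| := by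
    rw [Real.abs_sinh, ← Real.cosh_abs δ, Real.cosh_sub_sinh]
    have := Real.add_one_le_exp (-|δ|)
    linarith
  have h4 : -(Real.cosh τ * |Real.sinh δ|) ≤ Real.sinh τ * Real.sinh δ := by
    have h5 : |Real.sinh τ * Real.sinh δ| ≤ Real.cosh τ * |Real.sinh δ| := by
      rw [abs_mul]
      exact mul_le_mul_of_nonneg_right (abs_sinh_le_cosh τ) (abs_nonneg _)
    linarith [neg_abs_le (Real.sinh τ * Real.sinh δ)]
  nlinarith [Real.cosh_pos τ, mul_le_mul_of_nonneg_left hd (Real.cosh_pos τ).le]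

/-- On the disc of radius `1/4` around a real point `τ`, the function
`exp (-z cosh w)` is bounded by `exp (-(z/2) cosh τ)`. -/
private lemma norm_exp_cosh_le {z : ℝ} (hz : 1 ≤ z) (τ : ℝ) {w : ℂ}
    (hw : ‖w - ↑τ‖ ≤ 4⁻¹) :
    ‖Complex.exp (-(z : ℂ) * Complex.cosh w)‖ ≤ Real.exp (-(z / 2) * Real.cosh τ) := by
  rw [Complex.norm_exp]
  apply Real.exp_le_exp.2
  have hre : (-(z : ℂ) * Complex.cosh w).re = -z * (Complex.cosh w).re := by simp
  rw [hre, coshC_re]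
  have him : |w.im| ≤ 4⁻¹ := by
    have := Complex.abs_im_le_norm (w - ↑τ)
    simpa using this.trans hw
  have hre' : |w.re - τ| ≤ 4⁻¹ := by
    have := Complex.abs_re_le_norm (w - ↑τ)
    simpa using this.trans hw
  have hcos : 31 / 32 ≤ Real.cos w.im := by
    have h1 := Real.one_sub_sq_div_two_le_cos (x := w.im)
    nlinarith [sq_abs w.im, abs_nonneg w.im]
  have hcosh := cosh_lower hre'
  have key : Real.cosh τ / 2 ≤ Real.cosh w.re * Real.cos w.im := by
    nlinarith [Real.cosh_pos τ, Real.cosh_pos w.re,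
      mul_le_mul_of_nonneg_left hcos (Real.cosh_pos w.re).le]
  nlinarith [mul_le_mul_of_nonneg_left key (by linarith : (0:ℝ) ≤ z), Real.cosh_pos τ]

/-- Cauchy estimate for iterated derivatives of an entire function. -/
private lemma cauchy_bound {G : ℂ → ℂ} (hG : Differentiable ℂ G) (n : ℕ) (c : ℂ)
    {R : ℝ} (hR : 0 < R) {M : ℝ} (hM : ∀ θ : ℝ, ‖G (circleMap c R θ)‖ ≤ M) :
    ‖iteratedDeriv n G c‖ ≤ (Nat.factorial n) * M * R⁻¹ ^ n := by
  have hps : HasFPowerSeriesOnBall G (cauchyPowerSeries G c R) c ⊤ := by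
    have := hG.hasFPowerSeriesOnBall c (R := ⟨R, hR.le⟩) (by exact_mod_cast hR)
    exact this
  have h1 : iteratedDeriv n G c
      = (Nat.factorial n) • (cauchyPowerSeries G c R n fun _ => (1 : ℂ)) := by
    rw [iteratedDeriv_eq_iteratedFDeriv, ← hps.factorial_smul (1 : ℂ) n]
  have hM0 : 0 ≤ M := le_trans (norm_nonneg _) (hM 0)
  rw [h1]
  have h2 : ‖(Nat.factorial n) • (cauchyPowerSeries G c R n fun _ => (1 : ℂ))‖
      = ((Nat.factorial n : ℕ) : ℝ) * ‖cauchyPowerSeries G c R n fun _ => (1 : ℂ)‖ := by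
    rw [← Nat.cast_smul_eq_nsmul ℝ, norm_smul]
    simp
  rw [h2]
  have h3 : ‖cauchyPowerSeries G c R n fun _ => (1 : ℂ)‖ ≤ ‖cauchyPowerSeries G c R n‖ := by
    have := (cauchyPowerSeries G c R n).le_opNorm (fun _ => (1 : ℂ))
    simpa using this
  have h4 : ‖cauchyPowerSeries G c R n‖ ≤
      ((2 * π)⁻¹ * ∫ θ : ℝ in (0)..2 * π, ‖G (circleMap c R θ)‖) * |R|⁻¹ ^ n :=
    norm_cauchyPowerSeries_le G c R n
  have h5 : (∫ θ : ℝ in (0)..2 * π, ‖G (circleMap c R θ)‖) ≤ 2 * π * M := by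
    have hcont : Continuous fun θ : ℝ => ‖G (circleMap c R θ)‖ :=
      (hG.continuous.comp (continuous_circleMap c R)).norm
    calc (∫ θ : ℝ in (0)..2 * π, ‖G (circleMap c R θ)‖)
        ≤ ∫ _ : ℝ in (0)..2 * π, M := by
          apply intervalIntegral.integral_mono_on Real.two_pi_pos.le
            (hcont.intervalIntegrable _ _) (intervalIntegrable_const)
          intro θ _
          exact hM θ
      _ = 2 * π * M := by simp [mul_comm]
  have h6 : ((2 * π)⁻¹ * ∫ θ : ℝ in (0)..2 * π, ‖G (circleMap c R θ)‖) ≤ M := by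
    have h2pi : (0:ℝ) < 2 * π := Real.two_pi_pos
    calc (2 * π)⁻¹ * ∫ θ : ℝ in (0)..2 * π, ‖G (circleMap c R θ)‖
        ≤ (2 * π)⁻¹ * (2 * π * M) := by
          apply mul_le_mul_of_nonneg_left h5 (by positivity)
      _ = M := by field_simp
  have h7 : ‖cauchyPowerSeries G c R n‖ ≤ M * R⁻¹ ^ n := by
    refine h4.trans ?_
    rw [abs_of_pos hR]
    exact mul_le_mul_of_nonneg_right h6 (by positivity)
  calc ((Nat.factorial n : ℕ) : ℝ) * ‖cauchyPowerSeries G c R n fun _ => (1 : ℂ)‖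
      ≤ ((Nat.factorial n : ℕ) : ℝ) * (M * R⁻¹ ^ n) := by
        apply mul_le_mul_of_nonneg_left (h3.trans h7) (by positivity)
    _ = (Nat.factorial n) * M * R⁻¹ ^ n := by ring

/-- The iterated derivative of the complexified function agrees with the real one
along the real axis. -/
private lemma iteratedDeriv_ofReal (z : ℝ) :
    ∀ (n : ℕ) (τ : ℝ),
      iteratedDeriv n (fun σ : ℂ => Complex.exp (-(z : ℂ) * Complex.cosh σ)) ↑τ
        = ↑(iteratedDeriv n (fun σ : ℝ => Real.exp (-z * Real.cosh σ)) τ) := by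
  set G : ℂ → ℂ := fun σ => Complex.exp (-(z : ℂ) * Complex.cosh σ) with hGdef
  have hGdiff : Differentiable ℂ G := (Complex.differentiable_cosh.const_mul _).cexp
  intro n
  induction n with
  | zero =>
    intro τ
    simp only [iteratedDeriv_zero, hGdef]
    push_cast
    simp [Complex.ofReal_cosh]
  | succ n ih =>
    intro τ
    have hdiffn : Differentiable ℂ (iteratedDeriv n G) := by
      have hcd : ContDiff ℂ ((n + 1 : ℕ) : WithTop ℕ∞) G := hGdiff.contDiff
      exact hcd.differentiable_iteratedDeriv n (by exact_mod_cast n.lt_succ_self)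
    rw [iteratedDeriv_succ, iteratedDeriv_succ]
    have h1 : HasDerivAt (iteratedDeriv n G) (deriv (iteratedDeriv n G) ↑τ) ↑τ :=
      (hdiffn ↑τ).hasDerivAt
    set c := deriv (iteratedDeriv n G) ↑τ with hc
    -- real part
    have h2 : HasDerivAt (fun x : ℝ => (iteratedDeriv n G ↑x).re) c.re τ :=
      h1.real_of_complex
    have heq : (fun x : ℝ => (iteratedDeriv n G ↑x).re)
        = iteratedDeriv n (fun σ : ℝ => Real.exp (-z * Real.cosh σ)) := by
      funext x
      rw [ih x]
      simp
    rw [heq] at h2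
    -- imaginary part
    have h3 : HasDerivAt (fun x : ℝ => (iteratedDeriv n G ↑x)) c τ := h1.comp_ofReal
    have h4 : HasDerivAt (fun x : ℝ => (iteratedDeriv n G ↑x).im) c.im τ := by
      have := Complex.imCLM.hasFDerivAt.comp_hasDerivAt τ h3
      simp only [Complex.imCLM_apply] at this
      exact this
    have heq2 : (fun x : ℝ => (iteratedDeriv n G ↑x).im) = fun _ : ℝ => (0 : ℝ) := by
      funext x
      rw [ih x]
      simp
    rw [heq2] at h4
    have him : c.im = 0 := h4.unique (hasDerivAt_const τ 0)
    have hre : c.re = deriv (iteratedDeriv n (fun σ : ℝ => Real.exp (-z * Real.cosh σ))) τ :=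
      h2.deriv.symm
    apply Complex.ext
    · simpa using hre
    · simpa using him

/-- Derivative bound for the hyperbolic exponential: for every `m : ℕ` there is a constant `C`
(depending only on `m`) such that for all `z ≥ 1` and all `τ`,
`|D^{2m}[σ ↦ e^{-z cosh σ}](τ)| ≤ C z^{2m} e^{-(z/2) cosh τ}`. -/
theorem deriv_bound_hyperbolic_exponential (m : ℕ) :
    ∃ C : ℝ, ∀ z : ℝ, 1 ≤ z → ∀ τ : ℝ,
      |iteratedDeriv (2 * m) (fun σ => Real.exp (-z * Real.cosh σ)) τ|
        ≤ C * z ^ (2 * m) * Real.exp (-(z / 2) * Real.cosh τ) := by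
  refine ⟨(Nat.factorial (2 * m)) * 4 ^ (2 * m), fun z hz τ => ?_⟩
  have hz0 : (0 : ℝ) < z := lt_of_lt_of_le one_pos hz
  set n := 2 * m with hn
  set G : ℂ → ℂ := fun σ => Complex.exp (-(z : ℂ) * Complex.cosh σ) with hGdef
  have hGdiff : Differentiable ℂ G := (Complex.differentiable_cosh.const_mul _).cexp
  have hR : (0 : ℝ) < (4 * z)⁻¹ := by positivity
  have hM : ∀ θ : ℝ, ‖G (circleMap ↑τ (4 * z)⁻¹ θ)‖ ≤ Real.exp (-(z / 2) * Real.cosh τ) := by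
    intro θ
    apply norm_exp_cosh_le hz
    rw [circleMap_sub_center]
    rw [show ‖circleMap 0 (4 * z)⁻¹ θ‖ = |(4 * z)⁻¹| from norm_circleMap_zero _ _]
    rw [abs_of_pos hR]
    rw [inv_le_inv₀ (by positivity) (by norm_num)]
    linarith
  have hb := cauchy_bound hGdiff n (↑τ) hR hM
  rw [iteratedDeriv_ofReal z n τ] at hb
  rw [Complex.norm_real] at hb
  have hinv : ((4 * z)⁻¹)⁻¹ ^ n = 4 ^ n * z ^ n := by
    rw [inv_inv, mul_pow]
  rw [hinv] at hb
  calc |iteratedDeriv n (fun σ => Real.exp (-z * Real.cosh σ)) τ|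
      ≤ (Nat.factorial n) * Real.exp (-(z / 2) * Real.cosh τ) * (4 ^ n * z ^ n) := hb
    _ = (Nat.factorial n) * 4 ^ n * z ^ n * Real.exp (-(z / 2) * Real.cosh τ) := by ring
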